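/- Suppose Φ : ℝ × [0,π/2] → ℝ is smooth, bounded, and satisfies: (i) Φ_qq - 3Φ_q + (9/4)Φ + (9/4)Φ_zz = 0 in ℝ × (0,π/2); (ii) Φ_z = 0 on z = 0; (iii) Φ = 0 and Φ_z = 0 on z = π/2. Then Φ ≡ 0. -/

import Mathlib

open Real

/-- Partial derivative in the first variable. -/
noncomputable def pd1 (f : ℝ → ℝ → ℝ) : ℝ → ℝ → ℝ := fun q z => deriv (fun q' => f q' z) q

/-- Partial derivative in the second variable. -/
noncomputable def pd2 (f : ℝ → ℝ → ℝ) : ℝ → ℝ → ℝ := fun q z => deriv (fun z' => f q z') z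

open MeasureTheory Set

set_option maxHeartbeats 1000000

section Smooth
variable {f : ℝ → ℝ → ℝ}

lemma hasDerivAt_pd1 (hf : ContDiff ℝ (⊤ : ℕ∞) (Function.uncurry f)) (q z : ℝ) :
    HasDerivAt (fun q' => f q' z) (pd1 f q z) q := by
  have h1 : HasDerivAt (fun q' : ℝ => ((q', z) : ℝ × ℝ)) (1, 0) q :=
    (hasDerivAt_id q).prodMk (hasDerivAt_const q z)
  have h2 : HasDerivAt (fun q' => f q' z)
      (fderiv ℝ (Function.uncurry f) (q, z) (1, 0)) q :=
    by have := (hf.differentiable (by simp) (q, z)).hasFDerivAt.comp_hasDerivAt q h1; exact this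
  have h3 : pd1 f q z = fderiv ℝ (Function.uncurry f) (q, z) (1, 0) := h2.deriv
  rw [pd1] at *
  simpa [h3] using h2

lemma hasDerivAt_pd2 (hf : ContDiff ℝ (⊤ : ℕ∞) (Function.uncurry f)) (q z : ℝ) :
    HasDerivAt (fun z' => f q z') (pd2 f q z) z := by
  have h1 : HasDerivAt (fun z' : ℝ => ((q, z') : ℝ × ℝ)) (0, 1) z :=
    (hasDerivAt_const z q).prodMk (hasDerivAt_id z)
  have h2 : HasDerivAt (fun z' => f q z')
      (fderiv ℝ (Function.uncurry f) (q, z) (0, 1)) z :=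
    (hf.differentiable (by simp) (q, z)).hasFDerivAt.comp_hasDerivAt z h1
  have h3 : pd2 f q z = fderiv ℝ (Function.uncurry f) (q, z) (0, 1) := h2.deriv
  rw [pd2] at *
  simpa [h3] using h2

lemma contDiff_pd1 (hf : ContDiff ℝ (⊤ : ℕ∞) (Function.uncurry f)) :
    ContDiff ℝ (⊤ : ℕ∞) (Function.uncurry (pd1 f)) := by
  have h : Function.uncurry (pd1 f) =
      fun p : ℝ × ℝ => fderiv ℝ (Function.uncurry f) p ((1 : ℝ), (0 : ℝ)) := by
    funext p
    have h1 : HasDerivAt (fun q' : ℝ => ((q', p.2) : ℝ × ℝ)) (1, 0) p.1 :=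
      (hasDerivAt_id p.1).prodMk (hasDerivAt_const p.1 p.2)
    have h2 : HasDerivAt (fun q' => f q' p.2)
        (fderiv ℝ (Function.uncurry f) (p.1, p.2) (1, 0)) p.1 :=
      by have := (hf.differentiable (by simp) (p.1, p.2)).hasFDerivAt.comp_hasDerivAt p.1 h1; exact this
    simpa [Function.uncurry, pd1] using h2.deriv
  rw [h]
  exact (hf.fderiv_right (by simp)).clm_apply contDiff_const

lemma contDiff_pd2 (hf : ContDiff ℝ (⊤ : ℕ∞) (Function.uncurry f)) :
    ContDiff ℝ (⊤ : ℕ∞) (Function.uncurry (pd2 f)) := by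
  have h : Function.uncurry (pd2 f) =
      fun p : ℝ × ℝ => fderiv ℝ (Function.uncurry f) p ((0 : ℝ), (1 : ℝ)) := by
    funext p
    have h1 : HasDerivAt (fun z' : ℝ => ((p.1, z') : ℝ × ℝ)) (0, 1) p.2 :=
      (hasDerivAt_const p.2 p.1).prodMk (hasDerivAt_id p.2)
    have h2 : HasDerivAt (fun z' => f p.1 z')
        (fderiv ℝ (Function.uncurry f) (p.1, p.2) (0, 1)) p.2 :=
      (hf.differentiable (by simp) (p.1, p.2)).hasFDerivAt.comp_hasDerivAt p.2 h1
    simpa [Function.uncurry, pd2] using h2.deriv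
  rw [h]
  exact (hf.fderiv_right (by simp)).clm_apply contDiff_const

end Smooth

section ODE

lemma exp_ode (u : ℝ → ℝ) (r : ℝ) (hu : ∀ q, HasDerivAt u (r * u q) q) (q : ℝ) :
    u q = u 0 * Real.exp (r * q) := by
  have key : ∀ x : ℝ, HasDerivAt (fun t => u t * Real.exp (-(r * t))) 0 x := by
    intro x
    have h1 : HasDerivAt (fun t : ℝ => Real.exp (-(r * t))) (-r * Real.exp (-(r * x))) x := by
      have := (((hasDerivAt_id x).const_mul r).neg).exp
      simpa [mul_comm] using this
    have := (hu x).mul h1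
    refine this.congr_deriv (Eq.symm ?_)
    ring
  have hconst : ∀ x y : ℝ, u x * Real.exp (-(r * x)) = u y * Real.exp (-(r * y)) := by
    intro x y
    have hdiff : Differentiable ℝ (fun t => u t * Real.exp (-(r * t))) :=
      fun t => (key t).differentiableAt
    have hderiv : ∀ t, deriv (fun t => u t * Real.exp (-(r * t))) t = 0 :=
      fun t => (key t).deriv
    exact is_const_of_deriv_eq_zero hdiff hderiv x y
  have := hconst q 0
  simp only [mul_zero, neg_zero, Real.exp_zero, mul_one] at this
  have hinv : Real.exp (-(r * q)) * Real.exp (r * q) = 1 := by rw [← Real.exp_add]; simp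
  linear_combination this * Real.exp (r * q) - u q * hinv

/-- Distinct-roots case: a solution of `c'' = (r₁+r₂)c' - r₁r₂ c` has the form
`A e^{r₂ q} + B e^{r₁ q}`. -/
lemma second_order_ode (c d : ℝ → ℝ) (r1 r2 : ℝ) (hne : r1 ≠ r2)
    (hc : ∀ q, HasDerivAt c (d q) q)
    (hd : ∀ q, HasDerivAt d ((r1 + r2) * d q - r1 * r2 * c q) q) :
    ∃ A B : ℝ, ∀ q, c q = A * Real.exp (r2 * q) + B * Real.exp (r1 * q) := by
  set u : ℝ → ℝ := fun q => d q - r2 * c q with hu_def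
  have hu : ∀ q, HasDerivAt u (r1 * u q) q := by
    intro q
    have := (hd q).sub ((hc q).const_mul r2)
    refine this.congr_deriv (Eq.symm ?_)
    simp only [hu_def]
    ring
  have huq : ∀ q, u q = u 0 * Real.exp (r1 * q) := exp_ode u r1 hu
  set B : ℝ := u 0 / (r1 - r2) with hB_def
  -- v q = c q * exp(-(r2 q)) - B * exp((r1 - r2) q) is constant
  have key : ∀ x : ℝ, HasDerivAt
      (fun t => c t * Real.exp (-(r2 * t)) - B * Real.exp ((r1 - r2) * t)) 0 x := by
    intro x
    have h1 : HasDerivAt (fun t : ℝ => Real.exp (-(r2 * t))) (-r2 * Real.exp (-(r2 * x))) x := by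
      have := (((hasDerivAt_id x).const_mul r2).neg).exp
      simpa [mul_comm] using this
    have h2 : HasDerivAt (fun t : ℝ => B * Real.exp ((r1 - r2) * t))
        (B * ((r1 - r2) * Real.exp ((r1 - r2) * x))) x := by
      have := (((hasDerivAt_id x).const_mul (r1 - r2)).exp).const_mul B
      simpa [mul_comm] using this
    have h3 := ((hc x).mul h1).sub h2
    refine h3.congr_deriv (Eq.symm ?_)
    have hur : d x - r2 * c x = u 0 * Real.exp (r1 * x) := huq x
    have hd_eq : d x = r2 * c x + u 0 * Real.exp (r1 * x) := by linarith
    have hexp : Real.exp ((r1 - r2) * x) = Real.exp (r1 * x) * Real.exp (-(r2 * x)) := by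
      rw [← Real.exp_add]; ring_nf
    have h0 : r1 - r2 ≠ 0 := sub_ne_zero.mpr hne
    rw [hd_eq, hB_def, hexp]
    field_simp
    ring
  have hconst : ∀ x : ℝ,
      c x * Real.exp (-(r2 * x)) - B * Real.exp ((r1 - r2) * x)
        = c 0 * Real.exp (-(r2 * 0)) - B * Real.exp ((r1 - r2) * 0) := by
    intro x
    exact is_const_of_deriv_eq_zero (fun t => (key t).differentiableAt)
      (fun t => (key t).deriv) x 0
  refine ⟨c 0 - B, B, fun q => ?_⟩
  have h := hconst q
  simp only [mul_zero, neg_zero, Real.exp_zero, mul_one] at h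
  have hexp : Real.exp ((r1 - r2) * q) = Real.exp (r1 * q) * Real.exp (-(r2 * q)) := by
    rw [← Real.exp_add]; ring_nf
  rw [hexp] at h
  have hne' : Real.exp (-(r2 * q)) ≠ 0 := Real.exp_ne_zero _
  have hinv : Real.exp (-(r2 * q)) * Real.exp (r2 * q) = 1 := by
    rw [← Real.exp_add]; simp
  linear_combination h * Real.exp (r2 * q) - (c q - B * Real.exp (r1 * q)) * hinv

/-- Double-root case. -/
lemma second_order_ode_double (c d : ℝ → ℝ) (r : ℝ)
    (hc : ∀ q, HasDerivAt c (d q) q)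
    (hd : ∀ q, HasDerivAt d (2 * r * d q - r * r * c q) q) :
    ∃ A B : ℝ, ∀ q, c q = (A + B * q) * Real.exp (r * q) := by
  set u : ℝ → ℝ := fun q => d q - r * c q with hu_def
  have hu : ∀ q, HasDerivAt u (r * u q) q := by
    intro q
    have := (hd q).sub ((hc q).const_mul r)
    refine this.congr_deriv (Eq.symm ?_)
    simp only [hu_def]
    ring
  have huq : ∀ q, u q = u 0 * Real.exp (r * q) := exp_ode u r hu
  have key : ∀ x : ℝ, HasDerivAt (fun t => c t * Real.exp (-(r * t)) - u 0 * t) 0 x := by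
    intro x
    have h1 : HasDerivAt (fun t : ℝ => Real.exp (-(r * t))) (-r * Real.exp (-(r * x))) x := by
      have := (((hasDerivAt_id x).const_mul r).neg).exp
      simpa [mul_comm] using this
    have h2 : HasDerivAt (fun t : ℝ => u 0 * t) (u 0) x := by
      simpa using (hasDerivAt_id x).const_mul (u 0)
    have h3 := ((hc x).mul h1).sub h2
    refine h3.congr_deriv (Eq.symm ?_)
    have hur : d x - r * c x = u 0 * Real.exp (r * x) := huq x
    have hd_eq : d x = r * c x + u 0 * Real.exp (r * x) := by linarith
    have hinv : Real.exp (r * x) * Real.exp (-(r * x)) = 1 := by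
      rw [← Real.exp_add]; simp
    rw [hd_eq]
    linear_combination (-(u 0)) * hinv
  have hconst : ∀ x : ℝ, c x * Real.exp (-(r * x)) - u 0 * x
      = c 0 * Real.exp (-(r * 0)) - u 0 * 0 := by
    intro x
    exact is_const_of_deriv_eq_zero (fun t => (key t).differentiableAt)
      (fun t => (key t).deriv) x 0
  refine ⟨c 0, u 0, fun q => ?_⟩
  have h := hconst q
  simp only [mul_zero, neg_zero, Real.exp_zero, mul_one] at h
  have hinv : Real.exp (-(r * q)) * Real.exp (r * q) = 1 := by
    rw [← Real.exp_add]; simp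
  linear_combination h * Real.exp (r * q) - c q * hinv

/-- If `|B| e^{rq}` stays below `C` for all `q ≥ 0` with `r > 0`, then `B = 0`. -/
lemma eventually_zero_of_bounded_exp (B C r : ℝ) (hr : 0 < r)
    (h : ∀ q : ℝ, 0 ≤ q → |B| * Real.exp (r * q) ≤ C) : B = 0 := by
  by_contra hB
  have hB' : 0 < |B| := abs_pos.mpr hB
  have hC : |B| ≤ C := by simpa using h 0 le_rfl
  have hCpos : 0 < C := lt_of_lt_of_le hB' hC
  set q := C / (r * |B|) with hq
  have hqpos : 0 ≤ q := le_of_lt (div_pos hCpos (mul_pos hr hB'))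
  have hexp : r * q + 1 ≤ Real.exp (r * q) := Real.add_one_le_exp (r * q)
  have h2 := h q hqpos
  have h3 : |B| * (r * q + 1) ≤ C := le_trans (by nlinarith) h2
  have h4 : |B| * (r * q) = C := by
    rw [hq]; field_simp
  nlinarith

lemma bounded_combination_zero (A B r1 r2 M : ℝ) (h1 : 0 < r1) (h2 : r2 < 0)
    (hb : ∀ q : ℝ, |A * Real.exp (r2 * q) + B * Real.exp (r1 * q)| ≤ M) :
    A = 0 ∧ B = 0 := by
  have hBzero : B = 0 := by
    apply eventually_zero_of_bounded_exp B (M + |A|) r1 h1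
    intro q hq
    have hb' := hb q
    have he2 : Real.exp (r2 * q) ≤ 1 := by
      apply Real.exp_le_one_iff.mpr  -- maybe wrong name
      nlinarith
    have : |B * Real.exp (r1 * q)| ≤ M + |A * Real.exp (r2 * q)| := by
      have := abs_sub_abs_le_abs_sub (B * Real.exp (r1 * q)) (-(A * Real.exp (r2 * q)))
      have habs : |B * Real.exp (r1 * q) - -(A * Real.exp (r2 * q))| ≤ M := by
        simpa [sub_neg_eq_add, add_comm] using hb'
      simp only [abs_neg] at this
      linarith
    have hA : |A * Real.exp (r2 * q)| ≤ |A| := by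
      rw [abs_mul, abs_of_pos (Real.exp_pos _)]
      nlinarith [abs_nonneg A, Real.exp_pos (r2 * q)]
    rw [abs_mul, abs_of_pos (Real.exp_pos _)] at this
    linarith
  subst hBzero
  have hAzero : A = 0 := by
    apply eventually_zero_of_bounded_exp A M (-r2) (by linarith)
    intro q hq
    have hb' := hb (-q)
    simp only [zero_mul, add_zero] at hb'
    rw [abs_mul, abs_of_pos (Real.exp_pos _)] at hb'
    have : r2 * -q = -r2 * q := by ring
    rw [this] at hb'
    exact hb'
  exact ⟨hAzero, rfl⟩

lemma bounded_double_zero (A B r M : ℝ) (hr : 0 < r)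
    (hb : ∀ q : ℝ, |(A + B * q) * Real.exp (r * q)| ≤ M) : A = 0 ∧ B = 0 := by
  have hBzero : B = 0 := by
    by_contra hB
    have hB' : 0 < |B| := abs_pos.mpr hB
    have hM : 0 ≤ M := le_trans (abs_nonneg _) (hb 0)
    set q := (M + |A| + 1) / |B| with hq
    have hqpos : 0 ≤ q := by positivity
    have h1 : 1 ≤ Real.exp (r * q) := Real.one_le_exp (by positivity)
    have hb' := hb q
    rw [abs_mul, abs_of_pos (Real.exp_pos _)] at hb'
    have h2 : |A + B * q| ≤ M := by nlinarith [abs_nonneg (A + B * q)]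
    have h3 : |B * q| - |A| ≤ |A + B * q| := by
      have := abs_sub_abs_le_abs_sub (B * q) (-A)
      simpa [sub_neg_eq_add, add_comm] using this
    have h4 : |B * q| = M + |A| + 1 := by
      rw [abs_mul, abs_of_nonneg hqpos, hq]
      field_simp
    linarith
  subst hBzero
  have hAzero : A = 0 := by
    apply eventually_zero_of_bounded_exp A M r hr
    intro q hq
    have hb' := hb q
    rw [abs_mul] at hb'
    simpa [abs_of_pos (Real.exp_pos (r * q))] using hb'
  exact ⟨hAzero, rfl⟩

end ODE

lemma hasDerivAt_param_integral (G G₁ : ℝ → ℝ → ℝ)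
    (hG : Continuous (Function.uncurry G)) (hG₁ : Continuous (Function.uncurry G₁))
    (hd : ∀ q z, HasDerivAt (fun q' => G q' z) (G₁ q z) q) (a b q : ℝ) :
    HasDerivAt (fun q' => ∫ z in a..b, G q' z) (∫ z in a..b, G₁ q z) q := by
  obtain ⟨C, hC⟩ := (((isCompact_Icc : IsCompact (Icc (q - 1) (q + 1))).prod
    (isCompact_uIcc : IsCompact (uIcc a b))).exists_bound_of_continuousOn
    hG₁.continuousOn)
  have key := intervalIntegral.hasDerivAt_integral_of_dominated_loc_of_deriv_le
    (F := G) (F' := G₁) (x₀ := q) (a := a) (b := b) (μ := volume)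
    (bound := fun _ => C) (s := Metric.ball q 1) (Metric.ball_mem_nhds q one_pos)
    (Filter.Eventually.of_forall (fun x =>
      ((hG.comp (Continuous.prodMk_right x)).aestronglyMeasurable)))
    ((hG.comp (Continuous.prodMk_right q)).intervalIntegrable a b)
    ((hG₁.comp (Continuous.prodMk_right q)).aestronglyMeasurable)
    (Filter.Eventually.of_forall (fun t ht => fun x hx => ?_))
    (intervalIntegrable_const)
    (Filter.Eventually.of_forall (fun t ht => fun x hx => hd x t))
  · exact key.2
  · have hx' : x ∈ Icc (q - 1) (q + 1) := by
      have := abs_lt.mp (by simpa [Real.dist_eq] using hx)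
      constructor <;> linarith [this.1, this.2]
    have ht' : t ∈ uIcc a b := uIoc_subset_uIcc ht
    simpa using hC (x, t) (mk_mem_prod hx' ht')

lemma cont_aux (f : ℝ → ℝ) (hf : Continuous f) (k : ℝ) (n : ℕ) :
    Continuous (fun z => f z * Real.cos (k * z) * Real.cos (2 * z) ^ n) :=
  (hf.mul (Real.continuous_cos.comp (continuous_const.mul continuous_id))).mul
    ((Real.continuous_cos.comp (continuous_const.mul continuous_id)).pow n)

lemma cosine_moments_vanish (f : ℝ → ℝ) (hf : Continuous f)
    (h : ∀ k : ℕ, ∫ z in (0:ℝ)..(π/2), f z * Real.cos (2 * k * z) = 0) :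
    ∀ n : ℕ, ∫ z in (0:ℝ)..(π/2), f z * Real.cos (2 * z) ^ n = 0 := by
  -- integer version of hypothesis
  have hZ : ∀ k : ℤ, ∫ z in (0:ℝ)..(π/2), f z * Real.cos (2 * k * z) = 0 := by
    intro k
    rcases Int.natAbs_eq k with hk | hk
    · rw [hk]
      have e : (fun z => f z * Real.cos (2 * (((k.natAbs : ℤ)) : ℝ) * z))
          = fun z => f z * Real.cos (2 * (k.natAbs : ℝ) * z) := by
        funext z; rw [Int.cast_natCast]
      rw [e]; exact h k.natAbs
    · rw [hk]
      have e : (fun z => f z * Real.cos (2 * ((-(k.natAbs : ℤ) : ℤ) : ℝ) * z))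
          = fun z => f z * Real.cos (2 * (k.natAbs : ℝ) * z) := by
        funext z
        rw [Int.cast_neg, Int.cast_natCast,
          show 2 * -(k.natAbs : ℝ) * z = -(2 * (k.natAbs : ℝ) * z) by ring, Real.cos_neg]
      rw [e]; exact h k.natAbs
  have main : ∀ n : ℕ, ∀ k : ℤ,
      ∫ z in (0:ℝ)..(π/2), f z * Real.cos (2 * k * z) * Real.cos (2 * z) ^ n = 0 := by
    intro n
    induction n with
    | zero => intro k; simpa using hZ k
    | succ n ih =>
      intro k
      have key : (fun z => f z * Real.cos (2 * (k:ℝ) * z) * Real.cos (2 * z) ^ (n + 1))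
          = fun z => (1/2) * (f z * Real.cos (2 * ((k:ℤ)+1 : ℤ) * z) * Real.cos (2 * z) ^ n)
            + (1/2) * (f z * Real.cos (2 * ((k:ℤ)-1 : ℤ) * z) * Real.cos (2 * z) ^ n) := by
        funext z
        push_cast
        rw [show 2 * ((k:ℝ) + 1) * z = 2 * k * z + 2 * z by ring,
          show 2 * ((k:ℝ) - 1) * z = 2 * k * z - 2 * z by ring,
          Real.cos_add, Real.cos_sub, pow_succ]
        ring
      rw [key, intervalIntegral.integral_add
        (((cont_aux f hf _ n).intervalIntegrable _ _).const_mul _)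
        (((cont_aux f hf _ n).intervalIntegrable _ _).const_mul _),
        intervalIntegral.integral_const_mul, intervalIntegral.integral_const_mul,
        ih (k+1), ih (k-1)]
      ring
  intro n
  have := main n 0
  simpa using this

lemma poly_moments_vanish (f : ℝ → ℝ) (hf : Continuous f)
    (h : ∀ k : ℕ, ∫ z in (0:ℝ)..(π/2), f z * Real.cos (2 * k * z) = 0)
    (p : Polynomial ℝ) :
    ∫ z in (0:ℝ)..(π/2), f z * p.eval (Real.cos (2 * z)) = 0 := by
  have hn := cosine_moments_vanish f hf h
  have key : (fun z => f z * p.eval (Real.cos (2 * z)))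
      = fun z => ∑ i ∈ Finset.range (p.natDegree + 1),
          p.coeff i * (f z * Real.cos (2 * z) ^ i) := by
    funext z
    rw [Polynomial.eval_eq_sum_range, Finset.mul_sum]
    congr 1
    funext i
    ring
  rw [key, intervalIntegral.integral_finset_sum]
  · apply Finset.sum_eq_zero
    intro i _
    rw [intervalIntegral.integral_const_mul,
      show (∫ z in (0:ℝ)..(π/2), f z * Real.cos (2 * z) ^ i) = 0 from hn i, mul_zero]
  · intro i _
    exact Continuous.intervalIntegrable (by
      exact (continuous_const.mul (hf.mul
        ((Real.continuous_cos.comp (continuous_const.mul continuous_id)).pow i)))) _ _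


noncomputable def cosMap : C(Set.Icc (0:ℝ) (π/2), ℝ) :=
  ⟨fun t => Real.cos (2 * (t : ℝ)),
    Real.continuous_cos.comp (continuous_const.mul continuous_subtype_val)⟩

lemma cosMap_separates :
    (Algebra.adjoin ℝ ({cosMap} : Set C(Set.Icc (0:ℝ) (π/2), ℝ))).SeparatesPoints := by
  intro x y hxy
  refine ⟨cosMap, ⟨cosMap, Algebra.subset_adjoin (Set.mem_singleton _), rfl⟩, ?_⟩
  intro heq
  apply hxy
  have hx : 2 * (x : ℝ) ∈ Set.Icc 0 π := by
    constructor
    · linarith [x.2.1]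
    · linarith [x.2.2]
  have hy : 2 * (y : ℝ) ∈ Set.Icc 0 π := by
    constructor
    · linarith [y.2.1]
    · linarith [y.2.2]
  have := Real.injOn_cos hx hy heq
  ext
  linarith

/-- Polynomial approximation in `cos (2z)` of any continuous function on `[0, π/2]`. -/
lemma exists_poly_approx (f : ℝ → ℝ) (hf : Continuous f) (ε : ℝ) (hε : 0 < ε) :
    ∃ p : Polynomial ℝ, ∀ z ∈ Set.Icc (0:ℝ) (π/2),
      |f z - p.eval (Real.cos (2 * z))| ≤ ε := by
  set fc : C(Set.Icc (0:ℝ) (π/2), ℝ) := ⟨fun t => f t, hf.comp continuous_subtype_val⟩ with hfc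
  obtain ⟨g, hg⟩ := ContinuousMap.exists_mem_subalgebra_near_continuousMap_of_separatesPoints
    (Algebra.adjoin ℝ ({cosMap} : Set C(Set.Icc (0:ℝ) (π/2), ℝ))) cosMap_separates fc ε hε
  obtain ⟨gA, hgA⟩ := g
  have hgA2 : gA ∈ Algebra.adjoin ℝ ({cosMap} : Set C(Set.Icc (0:ℝ) (π/2), ℝ)) := hgA
  rw [Algebra.adjoin_singleton_eq_range_aeval ℝ cosMap] at hgA2
  obtain ⟨p, hp⟩ := hgA2
  refine ⟨p, fun z hz => ?_⟩
  have hval : gA ⟨z, hz⟩ = p.eval (Real.cos (2 * z)) := by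
    rw [← hp]
    exact Polynomial.aeval_continuousMap_apply p cosMap ⟨z, hz⟩
  have hnorm := ContinuousMap.norm_coe_le_norm (gA - fc) ⟨z, hz⟩
  have : |p.eval (Real.cos (2 * z)) - f z| ≤ ‖gA - fc‖ := by
    rw [← hval]
    simpa [ContinuousMap.sub_apply, hfc, Real.norm_eq_abs] using hnorm
  rw [abs_sub_comm]
  calc |p.eval (Real.cos (2 * z)) - f z| ≤ ‖gA - fc‖ := this
    _ ≤ ε := le_of_lt (by simpa using hg)

lemma cosine_density (f : ℝ → ℝ) (hf : Continuous f)
    (h : ∀ k : ℕ, ∫ z in (0:ℝ)..(π/2), f z * Real.cos (2 * k * z) = 0) :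
    ∀ z ∈ Set.Icc (0:ℝ) (π/2), f z = 0 := by
  have hpi : (0:ℝ) < π / 2 := by positivity
  obtain ⟨Cf, hCf⟩ := (isCompact_Icc : IsCompact (Set.Icc (0:ℝ) (π/2))).exists_bound_of_continuousOn
    hf.continuousOn
  have hCf0 : 0 ≤ Cf := le_trans (norm_nonneg _) (hCf 0 ⟨le_rfl, le_of_lt hpi⟩)
  have hI2 : ∫ z in (0:ℝ)..(π/2), f z ^ 2 = 0 := by
    have hnonneg : 0 ≤ ∫ z in (0:ℝ)..(π/2), f z ^ 2 := by
      apply intervalIntegral.integral_nonneg (le_of_lt hpi)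
      intro u _; positivity
    have hle : ∀ ε : ℝ, 0 < ε → (∫ z in (0:ℝ)..(π/2), f z ^ 2) ≤ Cf * ε * (π/2) := by
      intro ε hε
      obtain ⟨p, hp⟩ := exists_poly_approx f hf ε hε
      have hsplit : (∫ z in (0:ℝ)..(π/2), f z ^ 2)
          = (∫ z in (0:ℝ)..(π/2), f z * (f z - p.eval (Real.cos (2 * z))))
            + ∫ z in (0:ℝ)..(π/2), f z * p.eval (Real.cos (2 * z)) := by
        have hc0 : Continuous fun z : ℝ => Polynomial.eval (Real.cos (2 * z)) p :=
          p.continuous.comp (Real.continuous_cos.comp (continuous_const.mul continuous_id))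
        have hiA : IntervalIntegrable
            (fun z => f z * (f z - Polynomial.eval (Real.cos (2 * z)) p)) volume 0 (π/2) :=
          (hf.mul (hf.sub hc0)).intervalIntegrable _ _
        have hiB : IntervalIntegrable
            (fun z => f z * Polynomial.eval (Real.cos (2 * z)) p) volume 0 (π/2) :=
          (hf.mul hc0).intervalIntegrable _ _
        rw [← intervalIntegral.integral_add hiA hiB]
        congr 1
        funext z
        ring
      have hzero : (∫ z in (0:ℝ)..(π/2), f z * Polynomial.eval (Real.cos (2 * z)) p) = 0 :=
        poly_moments_vanish f hf h p
      have hbound : ‖∫ z in (0:ℝ)..(π/2), f z * (f z - Polynomial.eval (Real.cos (2 * z)) p)‖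
          ≤ Cf * ε * |π/2 - 0| := by
        apply intervalIntegral.norm_integral_le_of_norm_le_const
        intro z hz
        have hz' : z ∈ Set.Icc (0:ℝ) (π/2) := by
          rw [Set.uIoc_of_le (le_of_lt hpi)] at hz
          exact ⟨le_of_lt hz.1, hz.2⟩
        have h1 : ‖f z‖ ≤ Cf := hCf z hz'
        have h2 : ‖f z - Polynomial.eval (Real.cos (2 * z)) p‖ ≤ ε := hp z hz'
        calc ‖f z * (f z - Polynomial.eval (Real.cos (2 * z)) p)‖
            = ‖f z‖ * ‖f z - Polynomial.eval (Real.cos (2 * z)) p‖ := norm_mul _ _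
          _ ≤ Cf * ε := mul_le_mul h1 h2 (norm_nonneg _) hCf0
      rw [hsplit, hzero, add_zero]
      have habs : |π/2 - 0| = π/2 := by rw [sub_zero, abs_of_pos hpi]
      rw [habs] at hbound
      calc (∫ z in (0:ℝ)..(π/2), f z * (f z - Polynomial.eval (Real.cos (2 * z)) p))
          ≤ ‖∫ z in (0:ℝ)..(π/2), f z * (f z - Polynomial.eval (Real.cos (2 * z)) p)‖ :=
            le_abs_self _
        _ ≤ Cf * ε * (π/2) := hbound
    have : (∫ z in (0:ℝ)..(π/2), f z ^ 2) ≤ 0 := by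
      by_contra hpos
      push_neg at hpos
      set I := ∫ z in (0:ℝ)..(π/2), f z ^ 2 with hI
      have hεpos : 0 < I / (Cf * (π/2) + 1) := by positivity
      have hKle := hle _ hεpos
      have hK : Cf * (I / (Cf * (π/2) + 1)) * (π/2) < I := by
        have h2 : (0:ℝ) < Cf * (π/2) + 1 := by positivity
        calc Cf * (I / (Cf * (π/2) + 1)) * (π/2)
            = (Cf * (π/2)) / (Cf * (π/2) + 1) * I := by ring
          _ < 1 * I := by
              apply mul_lt_mul_of_pos_right _ hpos
              rw [div_lt_one h2]; linarith
          _ = I := one_mul I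
      linarith
    linarith
  intro z hz
  by_contra hfz
  have hpos : (0:ℝ) < ∫ u in (0:ℝ)..(π/2), f u ^ 2 := by
    apply intervalIntegral.integral_pos hpi
    · exact (hf.pow 2).continuousOn
    · intro u _; positivity
    · exact ⟨z, hz, by positivity⟩
  linarith [hI2, hpos]

section Main
variable (Φ : ℝ → ℝ → ℝ)

lemma moment_pd22 (q κ : ℝ) (k : ℕ) (hκ : κ = (k : ℝ))
    (hsmooth : ContDiff ℝ (⊤ : ℕ∞) (Function.uncurry Φ))
    (hp2 : ContDiff ℝ (⊤ : ℕ∞) (Function.uncurry (pd2 Φ)))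
    (hp22 : Continuous (Function.uncurry (pd2 (pd2 Φ))))
    (hd2 : ∀ q z, HasDerivAt (fun z' => Φ q z') (pd2 Φ q z) z)
    (hd22 : ∀ q z, HasDerivAt (fun z' => pd2 Φ q z') (pd2 (pd2 Φ) q z) z)
    (hbot : pd2 Φ q 0 = 0) (htop1 : Φ q (Real.pi/2) = 0) (htop2 : pd2 Φ q (Real.pi/2) = 0) :
    (∫ z in (0:ℝ)..(π/2), Real.cos (2*κ*z) * pd2 (pd2 Φ) q z)
      = -(4*κ^2) * ∫ z in (0:ℝ)..(π/2), Φ q z * Real.cos (2*κ*z) := by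
  have hΦc : Continuous (Function.uncurry Φ) := hsmooth.continuous
  have hcos : ∀ x : ℝ, HasDerivAt (fun z => Real.cos (2*κ*z)) (-Real.sin (2*κ*x) * (2*κ)) x := by
    intro x
    have h0 : HasDerivAt (fun z : ℝ => 2*κ*z) (2*κ) x := by
      simpa using (hasDerivAt_id x).const_mul (2*κ)
    exact h0.cos
  have hsin : ∀ x : ℝ, HasDerivAt (fun z => Real.sin (2*κ*z)) (Real.cos (2*κ*x) * (2*κ)) x := by
    intro x
    have h0 : HasDerivAt (fun z : ℝ => 2*κ*z) (2*κ) x := by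
      simpa using (hasDerivAt_id x).const_mul (2*κ)
    exact h0.sin
  have hcont_sin : Continuous fun x : ℝ => -Real.sin (2*κ*x) * (2*κ) := by fun_prop
  have hcont_cos : Continuous fun x : ℝ => Real.cos (2*κ*x) * (2*κ) := by fun_prop
  have hcont_p2 : Continuous fun z => pd2 Φ q z :=
    hp2.continuous.comp (Continuous.prodMk_right q)
  have hcont_p22 : Continuous fun z => pd2 (pd2 Φ) q z :=
    hp22.comp (Continuous.prodMk_right q)
  have hcont_Φ : Continuous fun z => Φ q z := hΦc.comp (Continuous.prodMk_right q)
  -- first integration by parts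
  have ibp1 := intervalIntegral.integral_mul_deriv_eq_deriv_mul
    (u := fun z => Real.cos (2*κ*z)) (u' := fun x => -Real.sin (2*κ*x) * (2*κ))
    (v := fun z => pd2 Φ q z) (v' := fun z => pd2 (pd2 Φ) q z)
    (a := 0) (b := π/2)
    (fun x _ => hcos x) (fun x _ => hd22 q x)
    (hcont_sin.intervalIntegrable _ _) (hcont_p22.intervalIntegrable _ _)
  beta_reduce at ibp1
  rw [htop2, hbot, mul_zero, mul_zero, sub_zero, zero_sub] at ibp1
  -- second integration by parts
  have ibp2 := intervalIntegral.integral_mul_deriv_eq_deriv_mul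
    (u := fun z => Real.sin (2*κ*z)) (u' := fun x => Real.cos (2*κ*x) * (2*κ))
    (v := fun z => Φ q z) (v' := fun z => pd2 Φ q z)
    (a := 0) (b := π/2)
    (fun x _ => hsin x) (fun x _ => hd2 q x)
    (hcont_cos.intervalIntegrable _ _) (hcont_p2.intervalIntegrable _ _)
  have hsin0 : Real.sin (2*κ*(π/2)) = 0 := by
    rw [show 2*κ*(π/2) = κ*π by ring, hκ]
    exact Real.sin_nat_mul_pi k
  beta_reduce at ibp2
  rw [htop1, hsin0, zero_mul, mul_zero, Real.sin_zero, zero_mul, sub_zero, zero_sub] at ibp2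
  have comm : (∫ z in (0:ℝ)..(π/2), Real.cos (2*κ*z) * Φ q z)
      = ∫ z in (0:ℝ)..(π/2), Φ q z * Real.cos (2*κ*z) := by
    apply intervalIntegral.integral_congr
    intro x _
    exact mul_comm _ _
  have e1 : (fun x => -Real.sin (2*κ*x) * (2*κ) * pd2 Φ q x)
      = fun x => (-(2*κ)) * (Real.sin (2*κ*x) * pd2 Φ q x) := by funext x; ring
  have e2 : (fun x => Real.cos (2*κ*x) * (2*κ) * Φ q x)
      = fun x => (2*κ) * (Real.cos (2*κ*x) * Φ q x) := by funext x; ring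
  rw [e1, intervalIntegral.integral_const_mul] at ibp1
  rw [e2, intervalIntegral.integral_const_mul] at ibp2
  rw [ibp1, ibp2, comm]
  ring
end Main

theorem stmt_15 (Φ : ℝ → ℝ → ℝ)
    (hsmooth : ContDiff ℝ (⊤ : ℕ∞) (Function.uncurry Φ))
    (hbdd : ∃ M : ℝ, ∀ q z : ℝ, |Φ q z| ≤ M)
    (hpde : ∀ q : ℝ, ∀ z ∈ Set.Ioo (0 : ℝ) (Real.pi / 2),
      pd1 (pd1 Φ) q z - 3 * pd1 Φ q z + (9 / 4) * Φ q z + (9 / 4) * pd2 (pd2 Φ) q z = 0)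
    (hbot : ∀ q : ℝ, pd2 Φ q 0 = 0)
    (htop : ∀ q : ℝ, Φ q (Real.pi / 2) = 0 ∧ pd2 Φ q (Real.pi / 2) = 0) :
    ∀ q : ℝ, ∀ z ∈ Set.Icc (0 : ℝ) (Real.pi / 2), Φ q z = 0 := by
  obtain ⟨M, hM⟩ := hbdd
  have hMpos : 0 ≤ M := le_trans (abs_nonneg _) (hM 0 0)
  have hpi : (0:ℝ) < π / 2 := by positivity
  have hΦc : Continuous (Function.uncurry Φ) := hsmooth.continuous
  have hp1 : ContDiff ℝ (⊤ : ℕ∞) (Function.uncurry (pd1 Φ)) := contDiff_pd1 hsmooth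
  have hp11 : ContDiff ℝ (⊤ : ℕ∞) (Function.uncurry (pd1 (pd1 Φ))) := contDiff_pd1 hp1
  have hp2 : ContDiff ℝ (⊤ : ℕ∞) (Function.uncurry (pd2 Φ)) := contDiff_pd2 hsmooth
  have hp22 : ContDiff ℝ (⊤ : ℕ∞) (Function.uncurry (pd2 (pd2 Φ))) := contDiff_pd2 hp2
  -- all Fourier moments vanish
  have key : ∀ (k : ℕ) (q : ℝ), (∫ z in (0:ℝ)..(π/2), Φ q z * Real.cos (2 * (k:ℝ) * z)) = 0 := by
    intro k
    set κ : ℝ := (k : ℝ) with hκ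
    have hκ0 : 0 ≤ κ := by rw [hκ]; positivity
    have hcosc : Continuous fun z : ℝ => Real.cos (2*κ*z) := by fun_prop
    set c : ℝ → ℝ := fun q => ∫ z in (0:ℝ)..(π/2), Φ q z * Real.cos (2*κ*z) with hc_def
    set d : ℝ → ℝ := fun q => ∫ z in (0:ℝ)..(π/2), pd1 Φ q z * Real.cos (2*κ*z) with hd_def
    set e : ℝ → ℝ := fun q => ∫ z in (0:ℝ)..(π/2), pd1 (pd1 Φ) q z * Real.cos (2*κ*z)
      with he_def
    have hGc : Continuous (Function.uncurry fun q z => Φ q z * Real.cos (2*κ*z)) := by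
      apply hΦc.mul
      exact hcosc.comp continuous_snd
    have hG1c : Continuous (Function.uncurry fun q z => pd1 Φ q z * Real.cos (2*κ*z)) := by
      apply hp1.continuous.mul
      exact hcosc.comp continuous_snd
    have hG11c : Continuous (Function.uncurry fun q z => pd1 (pd1 Φ) q z * Real.cos (2*κ*z)) := by
      apply hp11.continuous.mul
      exact hcosc.comp continuous_snd
    have hc : ∀ q, HasDerivAt c (d q) q := by
      intro q
      exact hasDerivAt_param_integral _ _ hGc hG1c
        (fun q z => (hasDerivAt_pd1 hsmooth q z).mul_const _) 0 (π/2) q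
    have hd : ∀ q, HasDerivAt d (e q) q := by
      intro q
      exact hasDerivAt_param_integral _ _ hG1c hG11c
        (fun q z => (hasDerivAt_pd1 hp1 q z).mul_const _) 0 (π/2) q
    -- the ODE satisfied by c
    have hode : ∀ q, e q = 3 * d q + (9*κ^2 - 9/4) * c q := by
      intro q
      have hae : ∀ᵐ x : ℝ, x ≠ π / 2 := by
        have hmem : ({(π/2 : ℝ)} : Set ℝ)ᶜ ∈ MeasureTheory.ae (volume : Measure ℝ) :=
          MeasureTheory.compl_mem_ae_iff.mpr Real.volume_singleton
        filter_upwards [hmem] with x hx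
        simpa using hx
      have e_eq : e q = ∫ z in (0:ℝ)..(π/2),
          (3 * pd1 Φ q z - (9/4) * Φ q z - (9/4) * pd2 (pd2 Φ) q z) * Real.cos (2*κ*z) := by
        rw [he_def]
        apply intervalIntegral.integral_congr_ae
        filter_upwards [hae] with x hx hmem
        rw [Set.uIoc_of_le (le_of_lt hpi)] at hmem
        have hxIoo : x ∈ Set.Ioo 0 (π/2) := ⟨hmem.1, lt_of_le_of_ne hmem.2 hx⟩
        have hpd := hpde q x hxIoo
        have : pd1 (pd1 Φ) q x = 3 * pd1 Φ q x - (9/4) * Φ q x - (9/4) * pd2 (pd2 Φ) q x := by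
          linarith
        rw [this]
      have hsplit : (∫ z in (0:ℝ)..(π/2),
          (3 * pd1 Φ q z - (9/4) * Φ q z - (9/4) * pd2 (pd2 Φ) q z) * Real.cos (2*κ*z))
          = 3 * d q - (9/4) * c q
            - (9/4) * ∫ z in (0:ℝ)..(π/2), Real.cos (2*κ*z) * pd2 (pd2 Φ) q z := by
        have i1 : IntervalIntegrable (fun z => pd1 Φ q z * Real.cos (2*κ*z)) volume 0 (π/2) :=
          (hG1c.comp (Continuous.prodMk_right q)).intervalIntegrable _ _
        have i2 : IntervalIntegrable (fun z => Φ q z * Real.cos (2*κ*z)) volume 0 (π/2) :=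
          (hGc.comp (Continuous.prodMk_right q)).intervalIntegrable _ _
        have i3 : IntervalIntegrable (fun z => Real.cos (2*κ*z) * pd2 (pd2 Φ) q z)
            volume 0 (π/2) :=
          (hcosc.mul (hp22.continuous.comp (Continuous.prodMk_right q))).intervalIntegrable _ _
        have expand : (fun z => (3 * pd1 Φ q z - (9/4) * Φ q z - (9/4) * pd2 (pd2 Φ) q z)
            * Real.cos (2*κ*z))
            = fun z => 3 * (pd1 Φ q z * Real.cos (2*κ*z))
              + ((-(9/4)) * (Φ q z * Real.cos (2*κ*z))
                + (-(9/4)) * (Real.cos (2*κ*z) * pd2 (pd2 Φ) q z)) := by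
          funext z
          ring
        rw [expand, intervalIntegral.integral_add (i1.const_mul 3)
          ((i2.const_mul _).add (i3.const_mul _)),
          intervalIntegral.integral_add (i2.const_mul _) (i3.const_mul _),
          intervalIntegral.integral_const_mul, intervalIntegral.integral_const_mul,
          intervalIntegral.integral_const_mul]
        rw [hd_def, hc_def]
        ring
      have hibp : (∫ z in (0:ℝ)..(π/2), Real.cos (2*κ*z) * pd2 (pd2 Φ) q z)
          = -(4*κ^2) * ∫ z in (0:ℝ)..(π/2), Φ q z * Real.cos (2*κ*z) :=
        moment_pd22 Φ q κ k hκ hsmooth hp2 hp22.continuous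
          (fun q z => hasDerivAt_pd2 hsmooth q z)
          (fun q z => hasDerivAt_pd2 hp2 q z)
          (hbot q) (htop q).1 (htop q).2
      rw [e_eq, hsplit, hibp, hc_def]
      ring
    -- boundedness of c
    have hcbdd : ∀ q, |c q| ≤ M * (π/2) := by
      intro q
      rw [hc_def]
      have := intervalIntegral.norm_integral_le_of_norm_le_const
        (C := M) (a := 0) (b := π/2) (f := fun z => Φ q z * Real.cos (2*κ*z)) ?_
      · rw [Real.norm_eq_abs] at this
        calc |∫ z in (0:ℝ)..(π/2), Φ q z * Real.cos (2*κ*z)| ≤ M * |π/2 - 0| := this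
          _ = M * (π/2) := by rw [sub_zero, abs_of_pos hpi]
      · intro x _
        rw [Real.norm_eq_abs, abs_mul]
        calc |Φ q x| * |Real.cos (2*κ*x)| ≤ M * 1 :=
            mul_le_mul (hM q x) (Real.abs_cos_le_one _) (abs_nonneg _) hMpos
          _ = M := mul_one M
    -- case split on k
    intro q
    show c q = 0
    rcases Nat.eq_zero_or_pos k with hk0 | hkpos
    · -- double root 3/2
      have hκz : κ = 0 := by rw [hκ, hk0]; simp
      have hd' : ∀ q, HasDerivAt d (2 * (3/2) * d q - (3/2) * (3/2) * c q) q := by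
        intro q
        have := hd q
        have heq : e q = 2 * (3/2) * d q - (3/2) * (3/2) * c q := by
          rw [hode q, hκz]; ring
        rwa [heq] at this
      obtain ⟨A, B, hAB⟩ := second_order_ode_double c d (3/2) hc hd'
      have hzero := bounded_double_zero A B (3/2) (M * (π/2)) (by norm_num)
        (fun q => by rw [← hAB q]; exact hcbdd q)
      rw [hAB q, hzero.1, hzero.2]
      ring
    · -- distinct roots 3/2 + 3κ, 3/2 - 3κ
      have hκ1 : 1 ≤ κ := by rw [hκ]; exact_mod_cast hkpos
      set r1 : ℝ := 3/2 + 3*κ with hr1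
      set r2 : ℝ := 3/2 - 3*κ with hr2
      have hne : r1 ≠ r2 := by rw [hr1, hr2]; intro hcon; nlinarith
      have hd' : ∀ q, HasDerivAt d ((r1 + r2) * d q - r1 * r2 * c q) q := by
        intro q
        have := hd q
        have heq : e q = (r1 + r2) * d q - r1 * r2 * c q := by
          rw [hode q, hr1, hr2]; ring
        rwa [heq] at this
      obtain ⟨A, B, hAB⟩ := second_order_ode c d r1 r2 hne hc hd'
      have hzero := bounded_combination_zero A B r1 r2 (M * (π/2))
        (by rw [hr1]; nlinarith) (by rw [hr2]; nlinarith)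
        (fun q => by rw [← hAB q]; exact hcbdd q)
      rw [hAB q, hzero.1, hzero.2]
      ring
  intro q z hz
  exact cosine_density (fun z => Φ q z) (hΦc.comp (Continuous.prodMk_right q))
    (fun k => key k q) z hz
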